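/- arXiv:1808.01008 — 3 statements merged into one kernel-verified Lean document; each statement's English description precedes it below -/
import Mathlib

section
/- For every integer n ≥ 1, C(n, n−1) = 2^{n−1}. -/
open scoped Classical

/-- Vertices `j` and `k` of `{1,…,n}` (encoded as `Fin n`, vertex `v` is `v+1`) are joined by
an edge determined by the composition `a`. -/
def CompEdge {n : ℕ} (a : Composition n) (j k : Fin n) : Prop :=
  j ≠ k ∧ ∃ i : Fin a.length,
    a.sizeUpTo i < (j : ℕ) + 1 ∧ (j : ℕ) + 1 ≤ a.sizeUpTo (i + 1) ∧
    a.sizeUpTo i < (k : ℕ) + 1 ∧ (k : ℕ) + 1 ≤ a.sizeUpTo (i + 1) ∧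
    ((j : ℕ) + 1) + ((k : ℕ) + 1) = 2 * a.sizeUpTo i + a.blocksFun i + 1

lemma CompEdge.symm {n : ℕ} {a : Composition n} {j k : Fin n} (h : CompEdge a j k) :
    CompEdge a k j := by
  obtain ⟨hne, i, h1, h2, h3, h4, h5⟩ := h
  exact ⟨hne.symm, i, h3, h4, h1, h2, by omega⟩

/-- The meander `M(a|b)` of the pair of compositions `(a, b)` of `n`. -/
def Meander {n : ℕ} (a b : Composition n) : SimpleGraph (Fin n) where
  Adj j k := CompEdge a j k ∨ CompEdge b j k
  symm := by
    constructor
    intro j k h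
    rcases h with h | h
    · exact Or.inl h.symm
    · exact Or.inr h.symm
  loopless := by
    constructor
    intro j h
    rcases h with ⟨hne, _⟩ | ⟨hne, _⟩ <;> exact hne rfl

/-- A connected component of the meander is a cycle if each of its vertices is incident
to both a top edge and a bottom edge. -/
def IsCycleComp {n : ℕ} (a b : Composition n) (c : (Meander a b).ConnectedComponent) : Prop :=
  ∀ v : Fin n, (Meander a b).connectedComponentMk v = c →
    (∃ w, CompEdge a v w) ∧ (∃ w, CompEdge b v w)

/-- The number of cycle components of the meander `M(a|b)`. -/
noncomputable def cycleCount {n : ℕ} (a b : Composition n) : ℕ :=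
  Nat.card {c : (Meander a b).ConnectedComponent // IsCycleComp a b c}

/-- The number of path components of the meander `M(a|b)`. -/
noncomputable def pathCount {n : ℕ} (a b : Composition n) : ℕ :=
  Nat.card {c : (Meander a b).ConnectedComponent // ¬ IsCycleComp a b c}

/-- The index `ind(a,b) = 2C + P - 1` of a pair of compositions of `n`. -/
noncomputable def seaweedInd {n : ℕ} (a b : Composition n) : ℕ :=
  2 * cycleCount a b + pathCount a b - 1

/-- `C(n,k)`: the number of ordered pairs of compositions of `n` of index `k`. -/
noncomputable def Cnk (n k : ℕ) : ℕ :=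
  Nat.card {p : Composition n × Composition n // seaweedInd p.1 p.2 = k}

/-! ### Auxiliary lemmas -/

variable {n : ℕ}

lemma compEdge_ne {a : Composition n} {v w : Fin n} (h : CompEdge a v w) : v ≠ w := h.1

lemma block_index_unique (a : Composition n) {j : ℕ} {i i' : Fin a.length}
    (h1 : a.sizeUpTo i < j) (h2 : j ≤ a.sizeUpTo (i + 1))
    (h3 : a.sizeUpTo i' < j) (h4 : j ≤ a.sizeUpTo (i' + 1)) : i = i' := by
  rcases lt_trichotomy (i : ℕ) (i' : ℕ) with h | h | h
  · have : a.sizeUpTo (i + 1) ≤ a.sizeUpTo i' := a.monotone_sizeUpTo (by omega)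
    omega
  · exact Fin.ext h
  · have : a.sizeUpTo (i' + 1) ≤ a.sizeUpTo i := a.monotone_sizeUpTo (by omega)
    omega

lemma compEdge_unique {a : Composition n} {v w w' : Fin n}
    (h : CompEdge a v w) (h' : CompEdge a v w') : w = w' := by
  obtain ⟨-, i, h1, h2, h3, h4, h5⟩ := h
  obtain ⟨-, i', h1', h2', h3', h4', h5'⟩ := h'
  have hii : i = i' := block_index_unique a h1 h2 h1' h2'
  subst hii
  exact Fin.ext (by omega)

lemma mem_boundaries_iff' (a : Composition n) (t : Fin (n + 1)) :
    t ∈ a.boundaries ↔ ∃ i : Fin (a.length + 1), a.sizeUpTo i = (t : ℕ) := by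
  simp [Composition.boundaries, Composition.boundary, Fin.ext_iff, OrderEmbedding.ofStrictMono]

lemma mem_boundaries_iff_edges (a : Composition n) (t : Fin (n + 1)) :
    t ∈ a.boundaries ↔ ∀ v w : Fin n, CompEdge a v w → (v : ℕ) < (t : ℕ) → (w : ℕ) < (t : ℕ) := by
  constructor
  · rw [mem_boundaries_iff']
    rintro ⟨i0, hi0⟩ v w ⟨hne, i, h1, h2, h3, h4, h5⟩ hv
    have hle : a.sizeUpTo (i + 1) ≤ a.sizeUpTo i0 := by
      apply a.monotone_sizeUpTo
      by_contra hlt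
      push_neg at hlt
      have : a.sizeUpTo i0 ≤ a.sizeUpTo i := a.monotone_sizeUpTo (by omega)
      omega
    omega
  · intro H
    by_contra ht
    have htn : (t : ℕ) ≠ n := by
      intro h
      exact ht ((mem_boundaries_iff' a t).2 ⟨Fin.last a.length, by
        simp [Composition.sizeUpTo_length, h]⟩)
    have htlt : (t : ℕ) < n := lt_of_le_of_ne (Nat.lt_succ_iff.mp t.2) htn
    set j : Fin n := ⟨(t : ℕ), htlt⟩ with hj
    set i := a.index j with hi
    have hs1 : a.sizeUpTo i ≤ (t : ℕ) := a.sizeUpTo_index_le j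
    have hs2 : (t : ℕ) < a.sizeUpTo (i + 1) := by
      have := a.lt_sizeUpTo_index_succ j
      simpa [Fin.val_succ] using this
    have hsne : a.sizeUpTo i ≠ (t : ℕ) := by
      intro h
      exact ht ((mem_boundaries_iff' a t).2 ⟨⟨(i : ℕ), by omega⟩, h⟩)
    have hslt : a.sizeUpTo i < (t : ℕ) := lt_of_le_of_ne hs1 hsne
    have hsucc : a.sizeUpTo (i + 1) = a.sizeUpTo i + a.blocksFun i := a.sizeUpTo_succ i.2
    set s := a.sizeUpTo i
    set m := a.blocksFun i
    have hm : 2 ≤ m := by omega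
    have hsn : s + m ≤ n := by
      have := a.sizeUpTo_le ((i : ℕ) + 1)
      omega
    have hedge : CompEdge a ⟨s, by omega⟩ ⟨s + m - 1, by omega⟩ := by
      refine ⟨?_, i, ?_, ?_, ?_, ?_, ?_⟩ <;>
        simp only [Fin.val_mk, ne_eq, Fin.mk.injEq] <;> omega
    have := H _ _ hedge (by simp only [Fin.val_mk]; omega)
    simp only [Fin.val_mk] at this
    omega

lemma compositionAsSet_ext {c d : CompositionAsSet n} (h : c.boundaries = d.boundaries) :
    c = d := by
  cases c; cases d; cases h; rfl

lemma composition_boundaries_inj {a b : Composition n} (h : a.boundaries = b.boundaries) :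
    a = b := by
  have h2 : a.toCompositionAsSet = b.toCompositionAsSet := by
    apply compositionAsSet_ext
    rw [a.toCompositionAsSet_boundaries, b.toCompositionAsSet_boundaries, h]
  exact (compositionEquiv n).injective h2

lemma composition_eq_of_edges_eq {a b : Composition n}
    (h : ∀ v w : Fin n, CompEdge a v w ↔ CompEdge b v w) : a = b := by
  apply composition_boundaries_inj
  ext t
  rw [mem_boundaries_iff_edges, mem_boundaries_iff_edges]
  constructor
  · intro H v w hvw hv
    exact H v w ((h v w).mpr hvw) hv
  · intro H v w hvw hv
    exact H v w ((h v w).mp hvw) hv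

/-! ### Graph counting -/

lemma reach_mem_of_closed {V : Type*} {G : SimpleGraph V} {S : Set V}
    (hS : ∀ u ∈ S, ∀ x, G.Adj u x → x ∈ S) :
    ∀ {u x : V}, G.Walk u x → u ∈ S → x ∈ S := by
  intro u x p
  induction p with
  | nil => exact id
  | cons h p ih => exact fun hu => ih (hS _ hu _ h)

lemma adj_partner {a b : Composition n}
    (h : ∀ v w : Fin n, CompEdge a v w ↔ CompEdge b v w) {v w : Fin n}
    (hvw : CompEdge a v w) {x : Fin n} (hx : (Meander a b).Adj v x) : x = w := by
  rcases hx with hx | hx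
  · exact compEdge_unique hx hvw
  · exact compEdge_unique ((h v x).mpr hx) hvw

lemma mk_eq_iff_pair {a b : Composition n}
    (h : ∀ v w : Fin n, CompEdge a v w ↔ CompEdge b v w) {v w : Fin n}
    (hvw : CompEdge a v w) (x : Fin n) :
    (Meander a b).connectedComponentMk x = (Meander a b).connectedComponentMk v ↔
      x = v ∨ x = w := by
  constructor
  · intro hx
    have hr : (Meander a b).Reachable v x :=
      (SimpleGraph.ConnectedComponent.exact hx).symm
    obtain ⟨p⟩ := hr
    have hS : ∀ u ∈ ({v, w} : Set (Fin n)), ∀ y, (Meander a b).Adj u y →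
        y ∈ ({v, w} : Set (Fin n)) := by
      rintro u (rfl | rfl) y hy
      · exact Or.inr (adj_partner h hvw hy)
      · exact Or.inl (adj_partner h hvw.symm hy)
    exact reach_mem_of_closed hS p (Or.inl rfl)
  · rintro (rfl | rfl)
    · rfl
    · exact SimpleGraph.ConnectedComponent.sound
        (SimpleGraph.Adj.reachable (Or.inl hvw)).symm

lemma mk_eq_iff_single {a b : Composition n}
    (h : ∀ v w : Fin n, CompEdge a v w ↔ CompEdge b v w) {v : Fin n}
    (hv : ∀ w, ¬ CompEdge a v w) (x : Fin n) :
    (Meander a b).connectedComponentMk x = (Meander a b).connectedComponentMk v ↔ x = v := by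
  constructor
  · intro hx
    have hr : (Meander a b).Reachable v x :=
      (SimpleGraph.ConnectedComponent.exact hx).symm
    obtain ⟨p⟩ := hr
    have hS : ∀ u ∈ ({v} : Set (Fin n)), ∀ y, (Meander a b).Adj u y →
        y ∈ ({v} : Set (Fin n)) := by
      rintro u rfl y (hy | hy)
      · exact absurd hy (hv y)
      · exact absurd ((h u y).mpr hy) (hv y)
    exact reach_mem_of_closed hS p rfl
  · rintro rfl; rfl

lemma counts_split (a b : Composition n) [Fintype (Meander a b).ConnectedComponent] :
    2 * cycleCount a b + pathCount a b =
      ∑ c : (Meander a b).ConnectedComponent, (if IsCycleComp a b c then 2 else 1) := by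
  have hc : cycleCount a b = (Finset.univ.filter (fun c => IsCycleComp a b c)).card := by
    rw [cycleCount, Nat.card_eq_fintype_card, Fintype.card_subtype]
  have hp : pathCount a b = (Finset.univ.filter (fun c => ¬ IsCycleComp a b c)).card := by
    rw [pathCount, Nat.card_eq_fintype_card, Fintype.card_subtype]
  rw [hc, hp,
    ← Finset.sum_filter_add_sum_filter_not Finset.univ (fun c => IsCycleComp a b c)
      (fun c => if IsCycleComp a b c then 2 else 1)]
  have h1 : ∑ c ∈ Finset.univ.filter (fun c => IsCycleComp a b c),
      (if IsCycleComp a b c then 2 else 1) =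
      2 * (Finset.univ.filter (fun c => IsCycleComp a b c)).card := by
    rw [Finset.sum_congr rfl (fun c hc => if_pos (Finset.mem_filter.mp hc).2),
      Finset.sum_const, smul_eq_mul, mul_comm]
  have h2 : ∑ c ∈ Finset.univ.filter (fun c => ¬ IsCycleComp a b c),
      (if IsCycleComp a b c then 2 else 1) =
      (Finset.univ.filter (fun c => ¬ IsCycleComp a b c)).card := by
    rw [Finset.sum_congr rfl (fun c hc => if_neg (Finset.mem_filter.mp hc).2),
      Finset.sum_const, smul_eq_mul, mul_one]
  rw [h1, h2]

lemma counts_fiber (a b : Composition n) [Fintype (Meander a b).ConnectedComponent] :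
    ∑ c : (Meander a b).ConnectedComponent,
      (Finset.univ.filter (fun v => (Meander a b).connectedComponentMk v = c)).card = n := by
  rw [← Finset.card_eq_sum_card_fiberwise
    (f := fun v => (Meander a b).connectedComponentMk v)
    (t := Finset.univ) (fun x _ => Finset.mem_univ _)]
  simp

lemma counts_eq {a b : Composition n}
    (h : ∀ v w : Fin n, CompEdge a v w ↔ CompEdge b v w) :
    2 * cycleCount a b + pathCount a b = n := by
  haveI : Finite (Meander a b).ConnectedComponent := Quot.finite _
  haveI : Fintype (Meander a b).ConnectedComponent := Fintype.ofFinite _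
  rw [counts_split a b]
  refine Eq.trans (Finset.sum_congr rfl ?_) (counts_fiber a b)
  intro c _
  induction c using SimpleGraph.ConnectedComponent.ind with
  | _ v =>
    by_cases hv : ∃ w, CompEdge a v w
    · obtain ⟨w, hw⟩ := hv
      have hcyc : IsCycleComp a b ((Meander a b).connectedComponentMk v) := by
        intro u hu
        rcases (mk_eq_iff_pair h hw u).mp hu with rfl | rfl
        · exact ⟨⟨w, hw⟩, ⟨w, (h u w).mp hw⟩⟩
        · exact ⟨⟨v, hw.symm⟩, ⟨v, (h u v).mp hw.symm⟩⟩
      have hFc : Finset.univ.filter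
          (fun x => (Meander a b).connectedComponentMk x =
            (Meander a b).connectedComponentMk v) = {v, w} := by
        ext x
        simp only [Finset.mem_filter, Finset.mem_univ, true_and, Finset.mem_insert,
          Finset.mem_singleton]
        exact mk_eq_iff_pair h hw x
      rw [if_pos hcyc, hFc,
        Finset.card_insert_of_notMem (by simp [compEdge_ne hw]),
        Finset.card_singleton]
    · push_neg at hv
      have hncyc : ¬ IsCycleComp a b ((Meander a b).connectedComponentMk v) := by
        intro hc
        obtain ⟨⟨w, hw⟩, -⟩ := hc v rfl
        exact hv w hw
      have hFc : Finset.univ.filter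
          (fun x => (Meander a b).connectedComponentMk x =
            (Meander a b).connectedComponentMk v) = {v} := by
        ext x
        simp only [Finset.mem_filter, Finset.mem_univ, true_and, Finset.mem_singleton]
        exact mk_eq_iff_single h hv x
      rw [if_neg hncyc, hFc, Finset.card_singleton]

lemma counts_lt {a b : Composition n}
    (h : ¬ ∀ v w : Fin n, CompEdge a v w ↔ CompEdge b v w) :
    2 * cycleCount a b + pathCount a b + 1 ≤ n ∧ 2 ≤ n := by
  haveI : Finite (Meander a b).ConnectedComponent := Quot.finite _
  haveI : Fintype (Meander a b).ConnectedComponent := Fintype.ofFinite _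
  push_neg at h
  obtain ⟨v, w, hvw⟩ := h
  set F : (Meander a b).ConnectedComponent → Finset (Fin n) :=
    fun c => Finset.univ.filter (fun x => (Meander a b).connectedComponentMk x = c) with hF
  have hmem : ∀ x : Fin n, x ∈ F ((Meander a b).connectedComponentMk x) := by
    intro x; simp only [hF, Finset.mem_filter, Finset.mem_univ, true_and]
  have hmem' : ∀ x y : Fin n, (Meander a b).Adj x y →
      y ∈ F ((Meander a b).connectedComponentMk x) := by
    intro x y hxy
    simp only [hF, Finset.mem_filter, Finset.mem_univ, true_and]
    exact SimpleGraph.ConnectedComponent.sound hxy.reachable.symm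
  have hle : ∀ c, (if IsCycleComp a b c then 2 else 1) ≤ (F c).card := by
    intro c
    induction c using SimpleGraph.ConnectedComponent.ind with
    | _ x =>
      by_cases hc : IsCycleComp a b ((Meander a b).connectedComponentMk x)
      · rw [if_pos hc]
        obtain ⟨⟨y, hy⟩, -⟩ := hc x rfl
        exact Finset.one_lt_card.mpr ⟨x, hmem x, y, hmem' x y (Or.inl hy), compEdge_ne hy⟩
      · rw [if_neg hc]
        exact Finset.card_pos.mpr ⟨x, hmem x⟩
  -- extract the two mismatch cases
  have hcases : (CompEdge a v w ∧ ¬ CompEdge b v w) ∨ (CompEdge b v w ∧ ¬ CompEdge a v w) := by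
    rcases hvw with ⟨ha, hb⟩ | ⟨ha, hb⟩
    · exact Or.inl ⟨ha, hb⟩
    · exact Or.inr ⟨hb, ha⟩
  set c₀ := (Meander a b).connectedComponentMk v with hc₀
  have hvF : v ∈ F c₀ := hmem v
  have hne : v ≠ w := by
    rcases hcases with ⟨ha, -⟩ | ⟨hb, -⟩
    · exact compEdge_ne ha
    · exact compEdge_ne hb
  have hwF : w ∈ F c₀ := by
    rcases hcases with ⟨ha, -⟩ | ⟨hb, -⟩
    · exact hmem' v w (Or.inl ha)
    · exact hmem' v w (Or.inr hb)
  have hstrict : (if IsCycleComp a b c₀ then 2 else 1) + 1 ≤ (F c₀).card := by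
    by_cases hc : IsCycleComp a b c₀
    · rw [if_pos hc]
      rcases hcases with ⟨ha, hb⟩ | ⟨hb, ha⟩
      · obtain ⟨-, ⟨u, hu⟩⟩ := hc v rfl
        have huF : u ∈ F c₀ := hmem' v u (Or.inr hu)
        have h2 : v ≠ u := compEdge_ne hu
        have h3 : w ≠ u := fun hwu => hb (by rw [hwu]; exact hu)
        calc 2 + 1 = ({v, w, u} : Finset (Fin n)).card := by
              rw [Finset.card_insert_of_notMem (by simp [hne, h2]),
                Finset.card_insert_of_notMem (by simp [h3]), Finset.card_singleton]
          _ ≤ (F c₀).card := Finset.card_le_card (by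
              intro x hx
              simp only [Finset.mem_insert, Finset.mem_singleton] at hx
              rcases hx with rfl | rfl | rfl <;> assumption)
      · obtain ⟨⟨u, hu⟩, -⟩ := hc v rfl
        have huF : u ∈ F c₀ := hmem' v u (Or.inl hu)
        have h2 : v ≠ u := compEdge_ne hu
        have h3 : w ≠ u := fun hwu => ha (by rw [hwu]; exact hu)
        calc 2 + 1 = ({v, w, u} : Finset (Fin n)).card := by
              rw [Finset.card_insert_of_notMem (by simp [hne, h2]),
                Finset.card_insert_of_notMem (by simp [h3]), Finset.card_singleton]
          _ ≤ (F c₀).card := Finset.card_le_card (by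
              intro x hx
              simp only [Finset.mem_insert, Finset.mem_singleton] at hx
              rcases hx with rfl | rfl | rfl <;> assumption)
    · rw [if_neg hc]
      exact Finset.one_lt_card.mpr ⟨v, hvF, w, hwF, hne⟩
  constructor
  · have e3 : ∑ c ∈ Finset.univ.erase c₀, (if IsCycleComp a b c then 2 else 1) ≤
        ∑ c ∈ Finset.univ.erase c₀, (F c).card :=
      Finset.sum_le_sum (fun c _ => hle c)
    rw [counts_split a b]
    calc (∑ c : (Meander a b).ConnectedComponent, if IsCycleComp a b c then 2 else 1) + 1
        = ((if IsCycleComp a b c₀ then 2 else 1) + 1) +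
            ∑ c ∈ Finset.univ.erase c₀, (if IsCycleComp a b c then 2 else 1) := by
          rw [← Finset.add_sum_erase Finset.univ
            (fun c => if IsCycleComp a b c then 2 else 1) (Finset.mem_univ c₀)]
          omega
      _ ≤ (F c₀).card + ∑ c ∈ Finset.univ.erase c₀, (F c).card := add_le_add hstrict e3
      _ = ∑ c : (Meander a b).ConnectedComponent, (F c).card :=
          Finset.add_sum_erase Finset.univ (fun c => (F c).card) (Finset.mem_univ c₀)
      _ = n := counts_fiber a b
  · have h1 : (v : ℕ) ≠ (w : ℕ) := fun hh => hne (Fin.ext hh)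
    have := v.isLt
    have := w.isLt
    omega

/-! ### Main argument -/

lemma seaweedInd_eq_iff {a b : Composition n} (hn : 1 ≤ n) :
    seaweedInd a b = n - 1 ↔ a = b := by
  constructor
  · intro hind
    by_cases h : ∀ v w : Fin n, CompEdge a v w ↔ CompEdge b v w
    · exact composition_eq_of_edges_eq h
    · obtain ⟨hle, h2⟩ := counts_lt h
      rw [seaweedInd] at hind
      omega
  · rintro rfl
    have h := counts_eq (a := a) (b := a) (fun v w => Iff.rfl)
    rw [seaweedInd]
    omega

def diagEquiv {X : Type*} : {p : X × X // p.1 = p.2} ≃ X where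
  toFun p := p.1.1
  invFun x := ⟨(x, x), rfl⟩
  left_inv := by rintro ⟨⟨x, y⟩, h⟩; cases h; rfl
  right_inv x := rfl

theorem C_n_nsub1 (n : ℕ) (hn : 1 ≤ n) : Cnk n (n - 1) = 2 ^ (n - 1) := by
  have e1 : ∀ p : Composition n × Composition n,
      seaweedInd p.1 p.2 = n - 1 ↔ p.1 = p.2 := fun p => seaweedInd_eq_iff hn
  rw [Cnk, Nat.card_congr ((Equiv.subtypeEquivRight e1).trans diagEquiv),
    Nat.card_eq_fintype_card, composition_card]
end

section
/- Let a, b be positive integers and n = a + b. Then ind((a,b), (n)) = gcd(a,b) − 1, where (a,b) and (n) are the two-part and one-part compositions of n respectively. -/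
open scoped Classical

/-- The composition of `n` with the given list of positive parts. -/
def compOfList (n : ℕ) (l : List ℕ) (hpos : ∀ x ∈ l, 0 < x) (hsum : l.sum = n) :
    Composition n :=
  ⟨l, fun hi => hpos _ hi, hsum⟩

/-! ### Auxiliary development -/

namespace SeaweedAux

/-- key modular fact -/
lemma key_mod {d x y : ℕ} (hd : 0 < d) (h : d ∣ (x + y + 1)) :
    x % d + y % d + 1 = d := by
  have hx : d ∣ x - x % d := Nat.dvd_sub_mod x
  have hy : d ∣ y - y % d := Nat.dvd_sub_mod y
  have hxle : x % d ≤ x := Nat.mod_le _ _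
  have hyle : y % d ≤ y := Nat.mod_le _ _
  have h2 : d ∣ (x % d + y % d + 1) := by
    have := Nat.dvd_sub (Nat.dvd_sub h hx) hy
    have heq : x + y + 1 - (x - x % d) - (y - y % d) = x % d + y % d + 1 := by omega
    rwa [heq] at this
  have hxlt : x % d < d := Nat.mod_lt _ hd
  have hylt : y % d < d := Nat.mod_lt _ hd
  exact Nat.eq_of_dvd_of_lt_two_mul (by omega) h2 (by omega)

section Main

variable {a b : ℕ} {T B : Composition (a + b)}

/-- characterization of bottom edges -/
lemma ceB (hB : B.blocks = [a + b]) (j k : Fin (a + b)) :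
    CompEdge B j k ↔ (j : ℕ) ≠ (k : ℕ) ∧ (j : ℕ) + (k : ℕ) + 2 = a + b + 1 := by
  have hlen : B.length = 1 := by simp [Composition.length, hB]
  have s0 : B.sizeUpTo 0 = 0 := by simp
  have s1 : B.sizeUpTo 1 = a + b := by simp [Composition.sizeUpTo, hB]
  have h0 : (0 : ℕ) < B.length := by omega
  have e1 : B.sizeUpTo ((⟨0, h0⟩ : Fin B.length) : ℕ) = 0 := s0
  have e2 : B.sizeUpTo (((⟨0, h0⟩ : Fin B.length) : ℕ) + 1) = a + b := s1
  have hs := B.sizeUpTo_succ' ⟨0, h0⟩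
  constructor
  · rintro ⟨hne, i, p1, p2, p3, p4, p5⟩
    have hi : (i : ℕ) = 0 := by have := i.isLt; omega
    have f1 : B.sizeUpTo (i : ℕ) = 0 := by rw [hi]; exact s0
    have f2 : B.sizeUpTo ((i : ℕ) + 1) = a + b := by rw [hi]; exact s1
    have fs := B.sizeUpTo_succ' i
    refine ⟨fun h => hne (Fin.ext h), by omega⟩
  · rintro ⟨hne, hsum⟩
    have hj := j.isLt
    have hk := k.isLt
    exact ⟨fun h => hne (by rw [h]), ⟨0, h0⟩, by omega, by omega, by omega, by omega, by omega⟩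

/-- characterization of top edges -/
lemma ceT (hT : T.blocks = [a, b]) (j k : Fin (a + b)) :
    CompEdge T j k ↔ (j : ℕ) ≠ (k : ℕ) ∧
      ((j : ℕ) + (k : ℕ) + 2 = a + 1 ∨ (j : ℕ) + (k : ℕ) + 2 = 2 * a + b + 1) := by
  have hlen : T.length = 2 := by simp [Composition.length, hT]
  have s0 : T.sizeUpTo 0 = 0 := by simp
  have s1 : T.sizeUpTo 1 = a := by simp [Composition.sizeUpTo, hT]
  have s2 : T.sizeUpTo 2 = a + b := by simp [Composition.sizeUpTo, hT]
  have h0 : (0 : ℕ) < T.length := by omega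
  have h1 : (1 : ℕ) < T.length := by omega
  have hj := j.isLt
  have hk := k.isLt
  constructor
  · rintro ⟨hne, i, p1, p2, p3, p4, p5⟩
    have fs := T.sizeUpTo_succ' i
    have hi : (i : ℕ) = 0 ∨ (i : ℕ) = 1 := by have := i.isLt; omega
    refine ⟨fun h => hne (Fin.ext h), ?_⟩
    rcases hi with hi | hi
    · have f1 : T.sizeUpTo (i : ℕ) = 0 := by rw [hi]; exact s0
      have f2 : T.sizeUpTo ((i : ℕ) + 1) = a := by rw [hi]; exact s1
      left; omega
    · have f1 : T.sizeUpTo (i : ℕ) = a := by rw [hi]; exact s1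
      have f2 : T.sizeUpTo ((i : ℕ) + 1) = a + b := by rw [hi]; exact s2
      right; omega
  · rintro ⟨hne, hsum | hsum⟩
    · have e1 : T.sizeUpTo ((⟨0, h0⟩ : Fin T.length) : ℕ) = 0 := s0
      have e2 : T.sizeUpTo (((⟨0, h0⟩ : Fin T.length) : ℕ) + 1) = a := s1
      have hs := T.sizeUpTo_succ' ⟨0, h0⟩
      exact ⟨fun h => hne (by rw [h]), ⟨0, h0⟩, by omega, by omega, by omega, by omega, by omega⟩
    · have e1 : T.sizeUpTo ((⟨1, h1⟩ : Fin T.length) : ℕ) = a := s1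
      have e2 : T.sizeUpTo (((⟨1, h1⟩ : Fin T.length) : ℕ) + 1) = a + b := s2
      have hs := T.sizeUpTo_succ' ⟨1, h1⟩
      exact ⟨fun h => hne (by rw [h]), ⟨1, h1⟩, by omega, by omega, by omega, by omega, by omega⟩

/-- adjacency in the meander -/
lemma adjIff (hT : T.blocks = [a, b]) (hB : B.blocks = [a + b]) (j k : Fin (a + b)) :
    (Meander T B).Adj j k ↔ (j : ℕ) ≠ (k : ℕ) ∧
      ((j : ℕ) + (k : ℕ) + 2 = a + 1 ∨ (j : ℕ) + (k : ℕ) + 2 = 2 * a + b + 1 ∨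
        (j : ℕ) + (k : ℕ) + 2 = a + b + 1) := by
  show CompEdge T j k ∨ CompEdge B j k ↔ _
  rw [ceT hT, ceB hB]
  tauto

/-- existence of a top neighbour -/
lemma exT (hT : T.blocks = [a, b]) (v : Fin (a + b)) :
    (∃ w, CompEdge T v w) ↔ (2 * (v : ℕ) + 2 ≠ a + 1 ∧ 2 * (v : ℕ) + 2 ≠ 2 * a + b + 1) := by
  have hv := v.isLt
  constructor
  · rintro ⟨w, hw⟩
    rw [ceT hT] at hw
    have hwlt := w.isLt
    obtain ⟨hne, h1 | h1⟩ := hw <;> constructor <;> omega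
  · rintro ⟨h1, h2⟩
    by_cases hva : (v : ℕ) < a
    · refine ⟨⟨a - 1 - v, by omega⟩, (ceT hT _ _).2 ?_⟩
      refine ⟨?_, Or.inl ?_⟩ <;> simp only [Fin.val_mk] <;> omega
    · refine ⟨⟨2 * a + b - 1 - v, by omega⟩, (ceT hT _ _).2 ?_⟩
      refine ⟨?_, Or.inr ?_⟩ <;> simp only [Fin.val_mk] <;> omega

/-- existence of a bottom neighbour -/
lemma exB (hB : B.blocks = [a + b]) (v : Fin (a + b)) :
    (∃ w, CompEdge B v w) ↔ 2 * (v : ℕ) + 2 ≠ a + b + 1 := by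
  have hv := v.isLt
  constructor
  · rintro ⟨w, hw⟩
    rw [ceB hB] at hw
    omega
  · intro h1
    refine ⟨⟨a + b - 1 - v, by omega⟩, (ceB hB _ _).2 ?_⟩
    constructor <;> simp only [Fin.val_mk] <;> omega


/-- one rotation step is realized by at most two meander edges -/
lemma reach_step (ha : 0 < a) (hb : 0 < b) (hT : T.blocks = [a, b]) (hB : B.blocks = [a + b])
    (v : Fin (a + b)) :
    (Meander T B).Reachable v ⟨((v : ℕ) + a) % (a + b), Nat.mod_lt _ (by omega)⟩ := by
  have hv := v.isLt
  set j := (v : ℕ) with hj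
  set t := (j + a) % (a + b) with htdef
  have hjv : v = ⟨j, hv⟩ := rfl
  rcases Nat.lt_or_ge j b with hjb | hjb
  · have htv : t = j + a := Nat.mod_eq_of_lt (by omega)
    by_cases hc1 : 2 * j + 2 = a + b + 1
    · refine SimpleGraph.Adj.reachable (Or.inl ((ceT hT _ _).2 ?_))
      simp only [Fin.val_mk]
      exact ⟨by omega, Or.inr (by omega)⟩
    · have hwlt : a + b - 1 - j < a + b := by omega
      have adj1 : (Meander T B).Adj v ⟨a + b - 1 - j, hwlt⟩ :=
        Or.inr ((ceB hB _ _).2 (by simp only [Fin.val_mk]; omega))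
      by_cases hw1 : 2 * (a + b - 1 - j) + 2 = a + 1 ∨ 2 * (a + b - 1 - j) + 2 = 2 * a + b + 1
      · have : (⟨t, Nat.mod_lt _ (by omega)⟩ : Fin (a + b)) = ⟨a + b - 1 - j, hwlt⟩ :=
          Fin.ext (by simp only [Fin.val_mk]; omega)
        rw [this]
        exact adj1.reachable
      · push_neg at hw1
        have adj2 : (Meander T B).Adj ⟨a + b - 1 - j, hwlt⟩ ⟨t, Nat.mod_lt _ (by omega)⟩ :=
          Or.inl ((ceT hT _ _).2 (by simp only [Fin.val_mk]; exact ⟨by omega, Or.inr (by omega)⟩))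
        exact adj1.reachable.trans adj2.reachable
  · have htv : t = j - b := by
      rw [htdef, Nat.mod_eq_sub_mod (by omega), show j + a - (a + b) = j - b by omega,
        Nat.mod_eq_of_lt (by omega)]
    by_cases hc1 : 2 * j + 2 = a + b + 1
    · refine SimpleGraph.Adj.reachable (Or.inl ((ceT hT _ _).2 ?_))
      simp only [Fin.val_mk]
      exact ⟨by omega, Or.inl (by omega)⟩
    · have hwlt : a + b - 1 - j < a + b := by omega
      have adj1 : (Meander T B).Adj v ⟨a + b - 1 - j, hwlt⟩ :=
        Or.inr ((ceB hB _ _).2 (by simp only [Fin.val_mk]; omega))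
      by_cases hw1 : 2 * (a + b - 1 - j) + 2 = a + 1 ∨ 2 * (a + b - 1 - j) + 2 = 2 * a + b + 1
      · have : (⟨t, Nat.mod_lt _ (by omega)⟩ : Fin (a + b)) = ⟨a + b - 1 - j, hwlt⟩ :=
          Fin.ext (by simp only [Fin.val_mk]; omega)
        rw [this]
        exact adj1.reachable
      · push_neg at hw1
        have adj2 : (Meander T B).Adj ⟨a + b - 1 - j, hwlt⟩ ⟨t, Nat.mod_lt _ (by omega)⟩ :=
          Or.inl ((ceT hT _ _).2 (by simp only [Fin.val_mk]; exact ⟨by omega, Or.inl (by omega)⟩))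
        exact adj1.reachable.trans adj2.reachable

/-- iterated rotation steps -/
lemma reach_iter (ha : 0 < a) (hb : 0 < b) (hT : T.blocks = [a, b]) (hB : B.blocks = [a + b])
    (v : Fin (a + b)) (s : ℕ) :
    (Meander T B).Reachable v ⟨((v : ℕ) + s * a) % (a + b), Nat.mod_lt _ (by omega)⟩ := by
  induction s with
  | zero =>
    have : (⟨((v : ℕ) + 0 * a) % (a + b), Nat.mod_lt _ (by omega)⟩ : Fin (a + b)) = v :=
      Fin.ext (by simp [Nat.mod_eq_of_lt v.isLt])
    rw [this]
  | succ s ih =>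
    refine ih.trans ?_
    have hstep := reach_step ha hb hT hB ⟨((v : ℕ) + s * a) % (a + b), Nat.mod_lt _ (by omega)⟩
    convert hstep using 1
    apply Fin.ext
    simp only [Fin.val_mk]
    rw [Nat.mod_add_mod]
    congr 1
    ring

/-- solving the congruence `s * a ≡ k - j  (mod a+b)` -/
lemma exists_iter (ha : 0 < a) (hb : 0 < b) {j k : ℕ} (hj : j < a + b) (hk : k < a + b)
    (hmod : j % Nat.gcd a b = k % Nat.gcd a b) :
    ∃ s : ℕ, (j + s * a) % (a + b) = k := by
  have hn : 0 < a + b := by omega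
  have hgcd : (Nat.gcd a (a + b) : ℤ) =
      a * Nat.gcdA a (a + b) + (a + b) * Nat.gcdB a (a + b) := Nat.gcd_eq_gcd_ab a (a + b)
  have hdd : Nat.gcd a (a + b) = Nat.gcd a b := Nat.gcd_self_add_right a b
  have hdvd : (Nat.gcd a b : ℤ) ∣ (k : ℤ) - j := by
    have h1 : (j : ℤ) % (Nat.gcd a b) = (k : ℤ) % (Nat.gcd a b) := by
      rw [← Int.natCast_mod, ← Int.natCast_mod, hmod]
    exact Int.ModEq.dvd h1
  obtain ⟨m, hm⟩ := hdvd
  have hddz : (Nat.gcd a (a + b) : ℤ) = (Nat.gcd a b : ℤ) := by rw [hdd]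
  set X : ℤ := m * Nat.gcdA a (a + b) with hX
  have key : (j : ℤ) + X * a = k - (a + b) * (m * Nat.gcdB a (a + b)) := by
    have h2 : (Nat.gcd a b : ℤ) = a * Nat.gcdA a (a + b) + (a + b) * Nat.gcdB a (a + b) := by
      rw [← hddz]; exact hgcd
    rw [hX]
    linear_combination -hm - m * h2
  have hXn : 0 ≤ X % (a + b) := Int.emod_nonneg X (by exact_mod_cast hn.ne')
  set s : ℕ := (X % (a + b)).toNat with hs
  have hsz : (s : ℤ) = X % (a + b) := Int.toNat_of_nonneg hXn
  have hcongr : ((j : ℤ) + s * a) % (a + b) = ((j : ℤ) + X * a) % (a + b) := by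
    have h3 : (s : ℤ) ≡ X [ZMOD (a + b)] := by
      rw [Int.ModEq, hsz, Int.emod_emod_of_dvd _ dvd_rfl]
    exact (h3.mul_right (a : ℤ)).add_left (j : ℤ)
  have h4 : ((j : ℤ) + X * a) % (a + b) = (k : ℤ) := by
    rw [key, sub_eq_add_neg, ← mul_neg, Int.add_mul_emod_self_left,
      Int.emod_eq_of_lt (by positivity) (by exact_mod_cast hk)]
  refine ⟨s, ?_⟩
  have h5 : (((j + s * a) % (a + b) : ℕ) : ℤ) = (k : ℤ) := by
    rw [Int.natCast_mod]
    push_cast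
    rw [hcongr, h4]
  exact_mod_cast h5

/-- vertices in the same residue class mod `gcd a b` are connected -/
lemma reach_of_mod (ha : 0 < a) (hb : 0 < b) (hT : T.blocks = [a, b]) (hB : B.blocks = [a + b])
    {v w : Fin (a + b)} (h : (v : ℕ) % Nat.gcd a b = (w : ℕ) % Nat.gcd a b) :
    (Meander T B).Reachable v w := by
  obtain ⟨s, hs⟩ := exists_iter ha hb v.isLt w.isLt h
  have := reach_iter ha hb hT hB v s
  have heq : (⟨((v : ℕ) + s * a) % (a + b), Nat.mod_lt _ (by omega)⟩ : Fin (a + b)) = w :=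
    Fin.ext hs
  rwa [heq] at this

/-- adjacent vertices have complementary residues -/
lemma adj_mod (ha : 0 < a) (hb : 0 < b) (hT : T.blocks = [a, b]) (hB : B.blocks = [a + b])
    {v w : Fin (a + b)} (hadj : (Meander T B).Adj v w) :
    (v : ℕ) % Nat.gcd a b + (w : ℕ) % Nat.gcd a b + 1 = Nat.gcd a b := by
  have hd0 : 0 < Nat.gcd a b := Nat.gcd_pos_of_pos_left _ ha
  rw [adjIff hT hB] at hadj
  obtain ⟨hne, h1 | h1 | h1⟩ := hadj
  · exact key_mod hd0 (by rw [show (v : ℕ) + (w : ℕ) + 1 = a by omega]; exact Nat.gcd_dvd_left a b)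
  · have hdvd : Nat.gcd a b ∣ a + (a + b) :=
      Nat.dvd_add (Nat.gcd_dvd_left a b)
        (Nat.dvd_add (Nat.gcd_dvd_left a b) (Nat.gcd_dvd_right a b))
    exact key_mod hd0
      (by rw [show (v : ℕ) + (w : ℕ) + 1 = a + (a + b) by omega]; exact hdvd)
  · have hdvd : Nat.gcd a b ∣ a + b :=
      Nat.dvd_add (Nat.gcd_dvd_left a b) (Nat.gcd_dvd_right a b)
    exact key_mod hd0
      (by rw [show (v : ℕ) + (w : ℕ) + 1 = a + b by omega]; exact hdvd)


/-- Master lemma: the index of the meander of `[a,b]` against `[a+b]`. -/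
lemma master (ha : 0 < a) (hb : 0 < b) (hT : T.blocks = [a, b]) (hB : B.blocks = [a + b]) :
    seaweedInd T B = Nat.gcd a b - 1 := by
  classical
  set d := Nat.gcd a b with hd
  have hd0 : 0 < d := Nat.gcd_pos_of_pos_left _ ha
  have hda : d ∣ a := Nat.gcd_dvd_left a b
  have hdb : d ∣ b := Nat.gcd_dvd_right a b
  have hdn : d ∣ a + b := Nat.dvd_add hda hdb
  have hdlea : d ≤ a := Nat.le_of_dvd ha hda
  set e := (d + 1) / 2 with he
  have hfb : ∀ v : Fin (a + b), min ((v : ℕ) % d) (d - 1 - (v : ℕ) % d) < e := fun v => by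
    have := Nat.mod_lt (v : ℕ) hd0; omega
  set F : Fin (a + b) → Fin e := fun v => ⟨_, hfb v⟩ with hF
  have hFval : ∀ v : Fin (a + b), (F v : ℕ) = min ((v : ℕ) % d) (d - 1 - (v : ℕ) % d) :=
    fun v => rfl
  -- adjacency invariance
  have hFadj : ∀ v w : Fin (a + b), (Meander T B).Adj v w → F v = F w := by
    intro v w hadj
    have h1 := adj_mod ha hb hT hB hadj
    rw [← hd] at h1
    have h2 := Nat.mod_lt (v : ℕ) hd0
    have h3 := Nat.mod_lt (w : ℕ) hd0
    apply Fin.ext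
    rw [hFval, hFval]
    omega
  have hFwalk : ∀ (v w : Fin (a + b)) (p : (Meander T B).Walk v w), F v = F w := by
    intro v w p
    induction p with
    | nil => rfl
    | cons h _ ih => exact (hFadj _ _ h).trans ih
  have hrep : ∀ m : Fin e, (m : ℕ) < a + b := fun m => by have := m.isLt; omega
  set Emk : (Meander T B).ConnectedComponent → Fin e :=
    SimpleGraph.ConnectedComponent.lift F (fun v w p _ => hFwalk v w p) with hEmk
  set Rep : Fin e → (Meander T B).ConnectedComponent :=
    fun m => (Meander T B).connectedComponentMk ⟨(m : ℕ), hrep m⟩ with hRep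
  have hEmk_mk : ∀ v : Fin (a + b), Emk ((Meander T B).connectedComponentMk v) = F v :=
    fun v => rfl
  -- every vertex has at least one neighbour
  have hnbr : ∀ v : Fin (a + b), ∃ w, (Meander T B).Adj v w := by
    intro v
    by_cases hc : 2 * (v : ℕ) + 2 = a + b + 1
    · obtain ⟨w, hw⟩ := (exT hT v).2 ⟨by omega, by omega⟩
      exact ⟨w, Or.inl hw⟩
    · obtain ⟨w, hw⟩ := (exB hB v).2 hc
      exact ⟨w, Or.inr hw⟩
  have hlr : ∀ c : (Meander T B).ConnectedComponent, Rep (Emk c) = c := by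
    refine SimpleGraph.ConnectedComponent.ind fun v => ?_
    rw [hEmk_mk]
    apply SimpleGraph.ConnectedComponent.sound
    have hvmod := Nat.mod_lt (v : ℕ) hd0
    have hFmod : ((⟨(F v : ℕ), hrep (F v)⟩ : Fin (a + b)) : ℕ) % d = (F v : ℕ) := by
      apply Nat.mod_eq_of_lt
      rw [hFval]
      omega
    by_cases hmin : (v : ℕ) % d ≤ d - 1 - (v : ℕ) % d
    · apply reach_of_mod ha hb hT hB
      rw [← hd, hFmod, hFval]
      omega
    · obtain ⟨w, hw⟩ := hnbr v
      have hwm := adj_mod ha hb hT hB hw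
      rw [← hd] at hwm
      refine (reach_of_mod ha hb hT hB (w := w) ?_).trans hw.symm.reachable
      rw [← hd, hFmod, hFval]
      omega
  have hrl : ∀ m : Fin e, Emk (Rep m) = m := by
    intro m
    rw [hRep]
    rw [hEmk_mk]
    apply Fin.ext
    rw [hFval]
    have hm := m.isLt
    have : ((⟨(m : ℕ), hrep m⟩ : Fin (a + b)) : ℕ) = (m : ℕ) := rfl
    rw [this, Nat.mod_eq_of_lt (by omega)]
    omega
  set E : (Meander T B).ConnectedComponent ≃ Fin e := ⟨Emk, Rep, hlr, hrl⟩ with hE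
  -- characterization of cycle components
  have hcyc : ∀ m : Fin e, IsCycleComp T B (Rep m) ↔ 2 * (m : ℕ) + 1 ≠ d := by
    intro m
    constructor
    · -- contrapositive : the exceptional class is not a cycle
      intro hcy
      intro hmd
      -- find a vertex missing a top edge
      have hpar : a % 2 = 1 ∨ b % 2 = 1 := by
        by_contra hcon
        push_neg at hcon
        have h2a : 2 ∣ a := by omega
        have h2b : 2 ∣ b := by omega
        have : 2 ∣ d := Nat.dvd_gcd h2a h2b
        omega
      obtain ⟨v, hvlt, hbad, hdvd⟩ : ∃ v : ℕ, v < a + b ∧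
          (2 * v + 2 = a + 1 ∨ 2 * v + 2 = 2 * a + b + 1) ∧ d ∣ 2 * v + 1 := by
        rcases hpar with hp | hp
        · exact ⟨(a - 1) / 2, by omega, Or.inl (by omega),
            by rw [show 2 * ((a - 1) / 2) + 1 = a by omega]; exact hda⟩
        · refine ⟨a + (b - 1) / 2, by omega, Or.inr (by omega), ?_⟩
          rw [show 2 * (a + (b - 1) / 2) + 1 = a + (a + b) by omega]
          exact Nat.dvd_add hda hdn
      have hvval : ((⟨v, hvlt⟩ : Fin (a + b)) : ℕ) = v := rfl
      have hkm : v % d + v % d + 1 = d :=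
        key_mod hd0 (by rw [show v + v + 1 = 2 * v + 1 by omega]; exact hdvd)
      have hFvv : F ⟨v, hvlt⟩ = m := by
        apply Fin.ext
        rw [hFval, hvval]
        omega
      have hmem : (Meander T B).connectedComponentMk ⟨v, hvlt⟩ = Rep m := by
        rw [hRep, ← hFvv]
        apply SimpleGraph.ConnectedComponent.sound
        apply (reach_of_mod ha hb hT hB ?_).symm
        rw [← hd]
        have h9 : ((⟨(F ⟨v, hvlt⟩ : ℕ), hrep (F ⟨v, hvlt⟩)⟩ : Fin (a + b)) : ℕ) =
            (F ⟨v, hvlt⟩ : ℕ) := rfl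
        rw [h9, Nat.mod_eq_of_lt (by rw [hFval]; omega), hFval, hvval]
        have hvmod := Nat.mod_lt v hd0
        omega
      obtain ⟨htop, _⟩ := hcy ⟨v, hvlt⟩ hmem
      rw [exT hT, hvval] at htop
      omega
    · intro hmd v hv
      have hFv : F v = m := by
        rw [← hEmk_mk v, hv]
        exact hrl m
      have hvmod := Nat.mod_lt (v : ℕ) hd0
      have hnokey : ∀ s : ℕ, d ∣ s → 2 * (v : ℕ) + 2 ≠ s + 1 := by
        intro s hs hcon
        have hkm : (v : ℕ) % d + (v : ℕ) % d + 1 = d :=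
          key_mod hd0 (by rw [show (v : ℕ) + (v : ℕ) + 1 = s by omega]; exact hs)
        have : (F v : ℕ) = (m : ℕ) := by rw [hFv]
        rw [hFval] at this
        omega
      constructor
      · rw [exT hT]
        refine ⟨hnokey a hda, ?_⟩
        have : d ∣ 2 * a + b := by
          rw [show 2 * a + b = a + (a + b) by omega]
          exact Nat.dvd_add hda hdn
        exact hnokey (2 * a + b) this
      · rw [exB hB]
        exact hnokey (a + b) hdn
  -- counting
  have hmid : ∀ c : (Meander T B).ConnectedComponent,
      IsCycleComp T B c ↔ IsCycleComp T B (Rep (E c)) := by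
    intro c
    rw [show Rep (E c) = E.symm (E c) from rfl, E.symm_apply_apply]
  have hE1 : {c : (Meander T B).ConnectedComponent // IsCycleComp T B c} ≃
      {m : Fin e // 2 * (m : ℕ) + 1 ≠ d} :=
    (E.subtypeEquiv (q := fun m => IsCycleComp T B (Rep m)) hmid).trans
      (Equiv.subtypeEquivRight fun m => hcyc m)
  have hE2 : {c : (Meander T B).ConnectedComponent // ¬ IsCycleComp T B c} ≃
      {m : Fin e // ¬ 2 * (m : ℕ) + 1 ≠ d} :=
    (E.subtypeEquiv (q := fun m => ¬ IsCycleComp T B (Rep m))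
        (fun c => not_congr (hmid c))).trans
      (Equiv.subtypeEquivRight fun m => not_congr (hcyc m))
  rw [seaweedInd, cycleCount, pathCount, Nat.card_congr hE1, Nat.card_congr hE2]
  rcases Nat.even_or_odd d with hpar | hpar
  · -- d even : all components are cycles
    have hdmod : d % 2 = 0 := by
      obtain ⟨k, hk⟩ := hpar; omega
    have hall : ∀ m : Fin e, 2 * (m : ℕ) + 1 ≠ d := fun m => by omega
    haveI : IsEmpty {m : Fin e // ¬ 2 * (m : ℕ) + 1 ≠ d} :=
      ⟨fun x => x.2 (hall x.1)⟩
    have hpath0 : Nat.card {m : Fin e // ¬ 2 * (m : ℕ) + 1 ≠ d} = 0 := Nat.card_of_isEmpty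
    have hcyce : Nat.card {m : Fin e // 2 * (m : ℕ) + 1 ≠ d} = e := by
      rw [Nat.card_congr (Equiv.subtypeUnivEquiv hall), Nat.card_eq_fintype_card,
        Fintype.card_fin]
    rw [hpath0, hcyce]
    omega
  · -- d odd : exactly one path component
    have hdmod : d % 2 = 1 := by
      obtain ⟨k, hk⟩ := hpar; omega
    set m0 : Fin e := ⟨(d - 1) / 2, by omega⟩ with hm0
    have hiff : ∀ m : Fin e, 2 * (m : ℕ) + 1 = d ↔ m = m0 := by
      intro m
      constructor
      · intro h
        apply Fin.ext
        have : ((m0 : Fin e) : ℕ) = (d - 1) / 2 := rfl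
        omega
      · rintro rfl
        have : ((m0 : Fin e) : ℕ) = (d - 1) / 2 := rfl
        omega
    have hP : Nat.card {m : Fin e // ¬ 2 * (m : ℕ) + 1 ≠ d} = 1 := by
      rw [Nat.card_congr (Equiv.subtypeEquivRight fun m => not_not.trans (hiff m))]
      haveI : Unique {m : Fin e // m = m0} :=
        ⟨⟨⟨m0, rfl⟩⟩, by rintro ⟨m, rfl⟩; rfl⟩
      exact Nat.card_unique
    have hC : Nat.card {m : Fin e // 2 * (m : ℕ) + 1 ≠ d} = e - 1 := by
      rw [Nat.card_congr (Equiv.subtypeEquivRight fun m => not_congr (hiff m))]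
      rw [Nat.card_eq_fintype_card, Fintype.card_subtype_compl, Fintype.card_fin,
        Fintype.card_subtype_eq]
    rw [hP, hC]
    omega

end Main

end SeaweedAux

theorem index_two_part_parabolic (a b : ℕ) (ha : 0 < a) (hb : 0 < b) :
    seaweedInd
      (compOfList (a + b) [a, b]
        (by intro x hx; rcases List.mem_pair.mp hx with rfl | rfl <;> assumption)
        (by simp))
      (compOfList (a + b) [a + b] (by intro x hx; simp at hx; omega) (by simp)) =
    Nat.gcd a b - 1 :=
  SeaweedAux.master ha hb rfl rfl
end

section
/- Let a, b, c be positive integers and n = a + b + c. Then ind((a,b,c), (n)) = gcd(a+b, b+c) − 1, where (a,b,c) is the three-part composition of n and (n) is the one-part composition of n. -/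
open scoped Classical

lemma topEdge_iff {n a b c : ℕ} (t : Composition n) (ht : t.blocks = [a, b, c])
    (j k : Fin n) :
    CompEdge t j k ↔ j ≠ k ∧
      ((j.val + k.val + 1 = a) ∨
       (a ≤ j.val ∧ a ≤ k.val ∧ j.val + k.val + 1 = 2*a + b) ∨
       (a + b ≤ j.val ∧ a + b ≤ k.val ∧ j.val + k.val + 1 = 2*a + 2*b + c)) := by
  have hlen : t.length = 3 := by simp [Composition.length, ht]
  have h0 : t.sizeUpTo 0 = 0 := by simp [Composition.sizeUpTo]
  have h1 : t.sizeUpTo 1 = a := by simp [Composition.sizeUpTo, ht]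
  have h2 : t.sizeUpTo 2 = a + b := by simp [Composition.sizeUpTo, ht]
  have h3 : t.sizeUpTo 3 = a + b + c := by
    simp [Composition.sizeUpTo, ht]; omega
  have hn : n = a + b + c := by
    have := t.blocks_sum; rw [ht] at this; simp at this; omega
  constructor
  · rintro ⟨hne, i, hj1, hj2, hk1, hk2, hsum⟩
    refine ⟨hne, ?_⟩
    have e := t.sizeUpTo_succ' i
    have hi3 : (i : ℕ) < 3 := hlen ▸ i.isLt
    rcases (by omega : (i : ℕ) = 0 ∨ (i : ℕ) = 1 ∨ (i : ℕ) = 2) with hiv | hiv | hiv <;>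
      rw [hiv] at e hj1 hj2 hk1 hk2 hsum <;>
      [(rw [show (0:ℕ)+1 = 1 from rfl] at e hj2 hk2);
       (rw [show (1:ℕ)+1 = 2 from rfl] at e hj2 hk2);
       (rw [show (2:ℕ)+1 = 3 from rfl] at e hj2 hk2)]
    · left; omega
    · right; left; omega
    · right; right; omega
  · rintro ⟨hne, h | h | h⟩
    · refine ⟨hne, ⟨0, by omega⟩, ?_⟩
      have e := t.sizeUpTo_succ' (⟨0, by omega⟩ : Fin t.length)
      simp only [Fin.val_mk] at e ⊢
      rw [show (0:ℕ)+1 = 1 from rfl] at e ⊢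
      omega
    · refine ⟨hne, ⟨1, by omega⟩, ?_⟩
      have e := t.sizeUpTo_succ' (⟨1, by omega⟩ : Fin t.length)
      simp only [Fin.val_mk] at e ⊢
      rw [show (1:ℕ)+1 = 2 from rfl] at e ⊢
      omega
    · refine ⟨hne, ⟨2, by omega⟩, ?_⟩
      have e := t.sizeUpTo_succ' (⟨2, by omega⟩ : Fin t.length)
      simp only [Fin.val_mk] at e ⊢
      rw [show (2:ℕ)+1 = 3 from rfl] at e ⊢
      have hj := j.isLt
      have hk := k.isLt
      omega

lemma botEdge_iff {n : ℕ} (u : Composition n) (hu : u.blocks = [n])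
    (j k : Fin n) :
    CompEdge u j k ↔ j ≠ k ∧ j.val + k.val + 1 = n := by
  have hlen : u.length = 1 := by simp [Composition.length, hu]
  have h0 : u.sizeUpTo 0 = 0 := by simp [Composition.sizeUpTo]
  have h1 : u.sizeUpTo 1 = n := by simp [Composition.sizeUpTo, hu]
  constructor
  · rintro ⟨hne, i, hj1, hj2, hk1, hk2, hsum⟩
    refine ⟨hne, ?_⟩
    have e := u.sizeUpTo_succ' i
    have hi1 : (i : ℕ) < 1 := hlen ▸ i.isLt
    have hiv : (i : ℕ) = 0 := by omega
    rw [hiv] at e hj1 hj2 hk1 hk2 hsum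
    rw [show (0:ℕ)+1 = 1 from rfl] at e hj2 hk2
    omega
  · rintro ⟨hne, h⟩
    refine ⟨hne, ⟨0, by omega⟩, ?_⟩
    have e := u.sizeUpTo_succ' (⟨0, by omega⟩ : Fin u.length)
    simp only [Fin.val_mk] at e ⊢
    rw [show (0:ℕ)+1 = 1 from rfl] at e ⊢
    have hj := j.isLt
    have hk := k.isLt
    omega

section Steps

variable {a b c : ℕ} {t u : Composition (a+b+c)}

lemma reach_of_eq_or_adj {n : ℕ} {G : SimpleGraph (Fin n)} {j k : Fin n}
    (h : j = k ∨ G.Adj j k) : G.Reachable j k := by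
  rcases h with rfl | h
  · exact SimpleGraph.Reachable.refl j
  · exact h.reachable

lemma step_reach (ht : t.blocks = [a,b,c]) (hu : u.blocks = [a+b+c])
    (ha : 0 < a) (hb : 0 < b) (hc : 0 < c)
    (x y : ℕ) (hx : x < a+b+c) (hy : y < a+b+c)
    (hcase : (x < c ∧ y = x + (a+b)) ∨ (c ≤ x ∧ x < b+c ∧ y + c = x + a) ∨
      (b+c ≤ x ∧ y + (b+c) = x)) :
    (Meander t u).Reachable ⟨x,hx⟩ ⟨y,hy⟩ := by
  have hmid : a+b+c-1-x < a+b+c := by omega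
  have r1 : (Meander t u).Reachable ⟨x,hx⟩ ⟨a+b+c-1-x, hmid⟩ := by
    apply reach_of_eq_or_adj
    by_cases hxy : x = a+b+c-1-x
    · left; exact Fin.ext hxy
    · right
      refine Or.inr ((botEdge_iff u hu _ _).mpr ⟨?_, by simp; omega⟩)
      simp [Fin.ext_iff]; omega
  refine r1.trans (reach_of_eq_or_adj ?_)
  by_cases hmy : a+b+c-1-x = y
  · left; exact Fin.ext hmy
  · right
    refine Or.inl ((topEdge_iff t ht _ _).mpr ⟨by simp [Fin.ext_iff]; omega, ?_⟩)
    simp only [Fin.val_mk]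
    rcases hcase with ⟨h1, h2⟩ | ⟨h1, h2, h3⟩ | ⟨h1, h2⟩
    · right; right; omega
    · right; left; omega
    · left; omega

lemma mod_sub (x m : ℕ) (h1 : m ≤ x) (h2 : x < 2*m) : x % m = x - m := by
  rw [Nat.mod_eq_sub_mod h1, Nat.mod_eq_of_lt (by omega)]

lemma reach_rot (ht : t.blocks = [a,b,c]) (hu : u.blocks = [a+b+c])
    (ha : 0 < a) (hb : 0 < b) (hc : 0 < c)
    (x : ℕ) (hx : x < a+b+c) (T : ℕ) :
    (∀ y, ∀ hy : y < a+b+c, (x + T*(a+b)) % (a+2*b+c) = y →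
      (Meander t u).Reachable ⟨x,hx⟩ ⟨y,hy⟩) ∧
    (∀ y, ∀ hy : y < a+b+c, a+b+c ≤ (x + T*(a+b)) % (a+2*b+c) →
      (x + T*(a+b)) % (a+2*b+c) = y + (b+c) →
      (Meander t u).Reachable ⟨x,hx⟩ ⟨y,hy⟩) := by
  induction T with
  | zero =>
    constructor
    · intro y hy hz
      simp only [Nat.zero_mul, Nat.add_zero, Nat.mod_eq_of_lt (by omega : x < a+2*b+c)] at hz
      subst hz; exact SimpleGraph.Reachable.refl _
    · intro y hy hge _
      rw [Nat.zero_mul, Nat.add_zero, Nat.mod_eq_of_lt (by omega : x < a+2*b+c)] at hge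
      omega
  | succ T ih =>
    obtain ⟨ih1, ih2⟩ := ih
    have hzdef : (x + (T+1)*(a+b)) % (a+2*b+c) = ((x + T*(a+b)) % (a+2*b+c) + (a+b)) % (a+2*b+c) := by
      rw [Nat.mod_add_mod]; ring_nf
    set z := (x + T*(a+b)) % (a+2*b+c) with hz
    have hzlt : z < a+2*b+c := Nat.mod_lt _ (by omega)
    constructor
    · intro y hy hzy
      rw [hzdef] at hzy
      by_cases h1 : z < a+b+c
      · -- z in range, reachable x z
        have hr : (Meander t u).Reachable ⟨x,hx⟩ ⟨z, h1⟩ := ih1 z h1 rfl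
        by_cases h2 : z < c
        · -- z' = z + p < n
          rw [Nat.mod_eq_of_lt (by omega)] at hzy
          exact hr.trans (step_reach ht hu ha hb hc z y h1 hy (by omega))
        · by_cases h3 : z < b+c
          · -- z' = z + p ∈ [n, m) contradiction with z' = y < n
            rw [Nat.mod_eq_of_lt (by omega)] at hzy
            omega
          · -- z ≥ b+c : z' = z + p - m = z - (b+c)
            rw [mod_sub _ _ (by omega) (by omega)] at hzy
            exact hr.trans (step_reach ht hu ha hb hc z y h1 hy (by omega))
      · -- z in gap [n, m): z' = z - (b+c) and ih2 gives reachability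
        have hy' : z - (b+c) < a+b+c := by omega
        rw [mod_sub _ _ (by omega) (by omega)] at hzy
        have : z - (b+c) = y := by omega
        subst this
        exact ih2 _ hy' (by omega) (by omega)
    · intro y hy hge hzy
      rw [hzdef] at hzy hge
      by_cases h1 : z < a+b+c
      · have hr : (Meander t u).Reachable ⟨x,hx⟩ ⟨z, h1⟩ := ih1 z h1 rfl
        by_cases h2 : z < c
        · rw [Nat.mod_eq_of_lt (by omega)] at hzy hge; omega
        · by_cases h3 : z < b+c
          · -- z' = z + p ≥ n, y = z' - (b+c) = z + a - c
            rw [Nat.mod_eq_of_lt (by omega)] at hzy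
            exact hr.trans (step_reach ht hu ha hb hc z y h1 hy (by omega))
          · rw [mod_sub _ _ (by omega) (by omega)] at hzy hge; omega
      · rw [mod_sub _ _ (by omega) (by omega)] at hzy hge
        omega

end Steps

section Chunk2
variable {a b c : ℕ} {t u : Composition (a+b+c)}

lemma exists_T (p m x y : ℕ) (hm : 0 < m) (h : x ≡ y [MOD Nat.gcd p m]) :
    ∃ T : ℕ, (x + T * p) % m = y % m := by
  have hbez : ((Nat.gcd p m : ℤ)) = p * Nat.gcdA p m + m * Nat.gcdB p m := Nat.gcd_eq_gcd_ab p m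
  obtain ⟨s, hs⟩ : ((Nat.gcd p m : ℤ)) ∣ (y : ℤ) - x := (Nat.modEq_iff_dvd).mp h
  set A := Nat.gcdA p m
  set B := Nat.gcdB p m
  set t' : ℤ := A * s with ht'
  have key : (m : ℤ) ∣ (x : ℤ) + t' * p - y := by
    refine ⟨-(B * s), ?_⟩
    have h2 : (y : ℤ) - x = (p * A + m * B) * s := by rw [← hbez]; exact hs
    linear_combination -h2
  set T : ℕ := (t' % m).toNat with hT
  have hTnn : (0:ℤ) ≤ t' % m := Int.emod_nonneg t' (by exact_mod_cast hm.ne')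
  have hTc : (T : ℤ) = t' % m := Int.toNat_of_nonneg hTnn
  obtain ⟨e, he⟩ := key
  have hf : (T : ℤ) - t' = m * (-(t' / m)) := by rw [hTc, Int.emod_def]; ring
  have key2 : (m : ℤ) ∣ (y : ℤ) - (x + T * p) := by
    refine ⟨-e - (-(t' / m)) * p, ?_⟩
    linear_combination -he - (p:ℤ) * hf
  have : (x + T * p) ≡ y [MOD m] := by
    rw [Nat.modEq_iff_dvd]
    push_cast
    convert key2 using 1
  exact ⟨T, this⟩

lemma gcd_m_eq : Nat.gcd (a+b) (a+2*b+c) = Nat.gcd (a+b) (b+c) := by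
  rw [show a+2*b+c = b+c + 1*(a+b) by ring, Nat.gcd_add_mul_right_right]

lemma reach_of_modeq (ht : t.blocks = [a,b,c]) (hu : u.blocks = [a+b+c])
    (ha : 0 < a) (hb : 0 < b) (hc : 0 < c)
    (x y : ℕ) (hx : x < a+b+c) (hy : y < a+b+c)
    (h : x ≡ y [MOD Nat.gcd (a+b) (b+c)]) :
    (Meander t u).Reachable ⟨x,hx⟩ ⟨y,hy⟩ := by
  rw [← gcd_m_eq] at h
  obtain ⟨T, hT⟩ := exists_T (a+b) (a+2*b+c) x y (by omega) h
  rw [Nat.mod_eq_of_lt (by omega : y < a+2*b+c)] at hT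
  exact (reach_rot ht hu ha hb hc x hx T).1 y hy hT

lemma sum_cong {g s a : ℕ} (h : g ∣ s) : (a + s) ≡ a [MOD g] :=
  ((Nat.modEq_iff_dvd' (Nat.le_add_right a s)).mpr (by simpa)).symm

lemma adj_rel (ht : t.blocks = [a,b,c]) (hu : u.blocks = [a+b+c])
    {v w : Fin (a+b+c)} (h : (Meander t u).Adj v w) :
    v.val + w.val + 1 ≡ a [MOD Nat.gcd (a+b) (b+c)] := by
  set g := Nat.gcd (a+b) (b+c) with hg
  have hgp : g ∣ a + b := Nat.gcd_dvd_left _ _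
  have hgq : g ∣ b + c := Nat.gcd_dvd_right _ _
  rcases h with h | h
  · rcases (topEdge_iff t ht v w).mp h with ⟨-, h1 | ⟨-, -, h1⟩ | ⟨-, -, h1⟩⟩
    · rw [h1]
    · rw [h1, show 2*a+b = a + (a+b) by ring]; exact sum_cong hgp
    · rw [h1, show 2*a+2*b+c = a + ((a+b)+(b+c)) by ring]
      exact sum_cong (Dvd.dvd.add hgp hgq)
  · rcases (botEdge_iff u hu v w).mp h with ⟨-, h1⟩
    rw [h1, show a+b+c = a + (b+c) by ring]
    exact sum_cong hgq

lemma reach_iff (ht : t.blocks = [a,b,c]) (hu : u.blocks = [a+b+c])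
    (ha : 0 < a) (hb : 0 < b) (hc : 0 < c) (v w : Fin (a+b+c)) :
    (Meander t u).Reachable v w ↔
      (v.val ≡ w.val [MOD Nat.gcd (a+b) (b+c)] ∨
       v.val + w.val + 1 ≡ a [MOD Nat.gcd (a+b) (b+c)]) := by
  set g := Nat.gcd (a+b) (b+c) with hg
  constructor
  · intro h
    obtain ⟨W⟩ := h
    induction W with
    | nil => exact Or.inl rfl
    | @cons j k w hadj W ih =>
      have h1 : (j.val + k.val + 1) ≡ a [MOD g] := adj_rel ht hu hadj
      rcases ih with h2 | h2
      · right
        calc j.val + w.val + 1 ≡ j.val + k.val + 1 [MOD g] := by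
              have := (Nat.ModEq.add_left j.val h2).add_right 1
              simpa [Nat.add_assoc] using this.symm
          _ ≡ a [MOD g] := h1
      · left
        have e1 : j.val + (k.val + w.val + 1) ≡ a + w.val [MOD g] := by
          have := h1.add_right w.val
          calc j.val + (k.val + w.val + 1) = j.val + k.val + 1 + w.val := by ring
            _ ≡ a + w.val [MOD g] := this
        have e2 : j.val + (k.val + w.val + 1) ≡ a + j.val [MOD g] := by
          have := h2.add_left j.val
          calc j.val + (k.val + w.val + 1) = j.val + (k.val + w.val + 1) := rfl
            _ ≡ j.val + a [MOD g] := this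
            _ = a + j.val := by ring
        have := (e1.symm.trans e2)
        exact (Nat.ModEq.add_left_cancel' a this).symm
  · intro h
    rcases h with h | h
    · have := reach_of_modeq ht hu ha hb hc v.val w.val v.isLt w.isLt h
      simpa using this
    · -- go through the bottom partner of v
      have hgq : g ∣ b + c := Nat.gcd_dvd_right _ _
      set x := v.val with hxv
      have hx : x < a+b+c := v.isLt
      have hmid : a+b+c-1-x < a+b+c := by omega
      have r1 : (Meander t u).Reachable v ⟨a+b+c-1-x, hmid⟩ := by
        apply reach_of_eq_or_adj
        by_cases hxy : x = a+b+c-1-x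
        · left; exact Fin.ext hxy
        · right
          refine Or.inr ((botEdge_iff u hu _ _).mpr ⟨?_, by simp; omega⟩)
          simp [Fin.ext_iff]; omega
      refine r1.trans ?_
      have hmw : (a+b+c-1-x) ≡ w.val [MOD g] := by
        have e1 : (a+b+c-1-x) + x + 1 ≡ a [MOD g] := by
          rw [show (a+b+c-1-x) + x + 1 = a + (b+c) by omega]
          exact sum_cong hgq
        have e2 : (a+b+c-1-x) + x + 1 ≡ w.val + x + 1 [MOD g] := by
          refine e1.trans ?_
          have : x + w.val + 1 ≡ a [MOD g] := h
          calc a ≡ x + w.val + 1 [MOD g] := this.symm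
            _ = w.val + x + 1 := by ring
        exact Nat.ModEq.add_right_cancel' (x+1) (by simpa [Nat.add_assoc] using e2)
      have := reach_of_modeq ht hu ha hb hc _ w.val hmid w.isLt hmw
      simpa using this

end Chunk2

section Chunk3
variable {a b c : ℕ} {t u : Composition (a+b+c)}

lemma no_top_partner (ht : t.blocks = [a,b,c]) (v : Fin (a+b+c))
    (h : ¬ ∃ w, CompEdge t v w) :
    2*v.val+1 = a ∨ 2*v.val+1 = 2*a+b ∨ 2*v.val+1 = 2*a+2*b+c := by
  by_contra hcon
  push_neg at hcon
  obtain ⟨hc1, hc2, hc3⟩ := hcon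
  apply h
  have hv := v.isLt
  by_cases h1 : v.val < a
  · refine ⟨⟨a-1-v.val, by omega⟩, (topEdge_iff t ht _ _).mpr
      ⟨by simp [Fin.ext_iff]; omega, Or.inl (by simp; omega)⟩⟩
  · by_cases h2 : v.val < a+b
    · refine ⟨⟨2*a+b-1-v.val, by omega⟩, (topEdge_iff t ht _ _).mpr
        ⟨by simp [Fin.ext_iff]; omega, Or.inr (Or.inl (by simp; omega))⟩⟩
    · refine ⟨⟨2*a+2*b+c-1-v.val, by omega⟩, (topEdge_iff t ht _ _).mpr
        ⟨by simp [Fin.ext_iff]; omega, Or.inr (Or.inr (by simp; omega))⟩⟩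

lemma no_bot_partner (hu : u.blocks = [a+b+c]) (v : Fin (a+b+c))
    (h : ¬ ∃ w, CompEdge u v w) : 2*v.val+1 = a+b+c := by
  by_contra hcon
  apply h
  have hv := v.isLt
  refine ⟨⟨a+b+c-1-v.val, by omega⟩, (botEdge_iff u hu _ _).mpr
    ⟨by simp [Fin.ext_iff]; omega, by simp; omega⟩⟩

lemma top_defect (ht : t.blocks = [a,b,c]) (hb : 0 < b) (hc : 0 < c) (v : Fin (a+b+c))
    (h : 2*v.val+1 = a ∨ 2*v.val+1 = 2*a+b ∨ 2*v.val+1 = 2*a+2*b+c) :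
    ¬ ∃ w, CompEdge t v w := by
  rintro ⟨w, hw⟩
  rcases (topEdge_iff t ht v w).mp hw with ⟨hne, h1 | ⟨hj,hk,h1⟩ | ⟨hj,hk,h1⟩⟩ <;>
    · have hne' : v.val ≠ w.val := fun e => hne (Fin.ext e)
      omega

lemma bot_defect (hu : u.blocks = [a+b+c]) (v : Fin (a+b+c))
    (h : 2*v.val+1 = a+b+c) : ¬ ∃ w, CompEdge u v w := by
  rintro ⟨w, hw⟩
  rcases (botEdge_iff u hu v w).mp hw with ⟨hne, h1⟩
  exact hne (Fin.ext (by omega))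

end Chunk3

section Chunk4
variable {a b c : ℕ}

lemma dvd_to_modeq {g v r : ℕ} {w : ℤ} (h : (v:ℤ) - r = g * w) : v ≡ r [MOD g] := by
  rw [Nat.modEq_iff_dvd]
  exact ⟨-w, by linear_combination -h⟩

lemma exists_defect (ha : 0 < a) (hb : 0 < b) (hc : 0 < c) (r0 : ℕ)
    (h : 2*r0+1 ≡ a [MOD Nat.gcd (a+b) (b+c)]) :
    ∃ v, v < a+b+c ∧ v ≡ r0 [MOD Nat.gcd (a+b) (b+c)] ∧
      (2*v+1 = a ∨ 2*v+1 = 2*a+b ∨ 2*v+1 = 2*a+2*b+c ∨ 2*v+1 = a+b+c) := by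
  set g := Nat.gcd (a+b) (b+c) with hg
  have hg0 : 0 < g := Nat.gcd_pos_of_pos_left _ (by omega)
  have hgp : g ∣ a+b := Nat.gcd_dvd_left _ _
  have hgq : g ∣ b+c := Nat.gcd_dvd_right _ _
  rcases Nat.even_or_odd g with hge | hgo
  · -- g even
    obtain ⟨k, hk⟩ := hge
    have hk' : g = 2*k := by omega
    have hk0 : 0 < k := by omega
    have hkz : (g:ℤ) = 2*k := by exact_mod_cast hk'
    have h2g : 2 ∣ g := ⟨k, hk'⟩
    have h2p : 2 ∣ a+b := h2g.trans hgp
    have h2q : 2 ∣ b+c := h2g.trans hgq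
    have haO : a % 2 = 1 := by
      have h2' : (2*r0+1) % 2 = a % 2 := Nat.ModEq.of_dvd h2g h
      omega
    set v1 := a / 2 with hv1
    have hv1' : 2*v1+1 = a := by omega
    have step1 : 2*r0 ≡ 2*v1 [MOD g] := Nat.ModEq.add_right_cancel' 1 (by
      calc 2*r0+1 ≡ a [MOD g] := h
        _ = 2*v1+1 := hv1'.symm)
    have hgcd2 : g.gcd 2 = 2 := Nat.gcd_eq_right h2g
    have step2 : r0 ≡ v1 [MOD k] := by
      have h5 := Nat.ModEq.cancel_left_div_gcd hg0 step1
      rwa [hgcd2, show g / 2 = k by omega] at h5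
    obtain ⟨s, hs⟩ : (k:ℤ) ∣ (v1:ℤ) - r0 := (Nat.modEq_iff_dvd).mp step2
    obtain ⟨p2, hp2⟩ := h2p
    obtain ⟨q2, hq2⟩ := h2q
    obtain ⟨e1, he1⟩ := hgp
    obtain ⟨e2, he2⟩ := hgq
    have hpe : p2 = k*e1 := by
      have : a+b = 2*(k*e1) := by rw [he1, hk']; ring
      omega
    have hqe : q2 = k*e2 := by
      have : b+c = 2*(k*e2) := by rw [he2, hk']; ring
      omega
    have hcop : Nat.gcd e1 e2 = 1 := by
      have e3 : g = Nat.gcd ((2*k)*e1) ((2*k)*e2) := by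
        rw [hg]; congr 1
        · rw [he1, hk']
        · rw [he2, hk']
      rw [Nat.gcd_mul_left] at e3
      have : (2*k) * Nat.gcd e1 e2 = (2*k) * 1 := by omega
      exact Nat.eq_of_mul_eq_mul_left (by omega) this
    have hpez : (p2:ℤ) = k*e1 := by exact_mod_cast hpe
    have hqez : (q2:ℤ) = k*e2 := by exact_mod_cast hqe
    rcases Int.even_or_odd s with hsE | hsO
    · obtain ⟨s', hs'⟩ := hsE
      refine ⟨v1, by omega, dvd_to_modeq (w := s') ?_, by omega⟩
      linear_combination hs - s' * hkz + k * hs'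
    · obtain ⟨s', hs'⟩ := hsO
      rcases Nat.even_or_odd e1 with heE | heO
      · -- e1 even, so e2 must be odd
        rcases Nat.even_or_odd e2 with heE2 | heO2
        · exfalso
          have : 2 ∣ Nat.gcd e1 e2 := Nat.dvd_gcd heE.two_dvd heE2.two_dvd
          omega
        · obtain ⟨f, hf⟩ := heO2
          have hfz : (e2:ℤ) = 2*f+1 := by exact_mod_cast hf
          have hsz : s = 2*s'+1 := hs'
          refine ⟨v1 + q2, by omega, dvd_to_modeq (w := ((s':ℤ) + f + 1)) ?_, by omega⟩
          push_cast
          linear_combination hs + k * hsz + hqez + k * hfz - ((s':ℤ) + f + 1) * hkz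
      · obtain ⟨f, hf⟩ := heO
        have hfz : (e1:ℤ) = 2*f+1 := by exact_mod_cast hf
        have hsz : s = 2*s'+1 := hs'
        refine ⟨v1 + p2, by omega, dvd_to_modeq (w := ((s':ℤ) + f + 1)) ?_, by omega⟩
        push_cast
        linear_combination hs + k * hsz + hpez + k * hfz - ((s':ℤ) + f + 1) * hkz
  · -- g odd
    have hcop : g.gcd 2 = 1 := (Nat.coprime_two_right).mpr hgo
    have pick : ∃ o, g ∣ o ∧ (a + o) % 2 = 1 ∧ (o = 0 ∨ o = a+b ∨ o = b+c) := by
      rcases Nat.even_or_odd a with haE | haO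
      · rcases Nat.even_or_odd (a+b) with hpE | hpO
        · rcases Nat.even_or_odd (b+c) with hqE | hqO
          · exfalso
            have h2 : 2 ∣ g := Nat.dvd_gcd hpE.two_dvd hqE.two_dvd
            obtain ⟨e, he⟩ := hgo; omega
          · refine ⟨b+c, hgq, ?_, Or.inr (Or.inr rfl)⟩
            obtain ⟨x1, hx1⟩ := haE; obtain ⟨x2, hx2⟩ := hqO; omega
        · refine ⟨a+b, hgp, ?_, Or.inr (Or.inl rfl)⟩
          obtain ⟨x1, hx1⟩ := haE; obtain ⟨x2, hx2⟩ := hpO; omega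
      · refine ⟨0, dvd_zero g, ?_, Or.inl rfl⟩
        obtain ⟨x1, hx1⟩ := haO; omega
    obtain ⟨o, hodvd, hoodd, hcase⟩ := pick
    refine ⟨(a+o)/2, by omega, ?_, by omega⟩
    have e1 : 2*((a+o)/2)+1 = a + o := by omega
    have e2 : (a+o) ≡ a [MOD g] := sum_cong hodvd
    have e3 : 2*((a+o)/2)+1 ≡ 2*r0+1 [MOD g] := by rw [e1]; exact e2.trans h.symm
    have e4 : 2*((a+o)/2) ≡ 2*r0 [MOD g] := Nat.ModEq.add_right_cancel' 1 e3
    exact Nat.ModEq.cancel_left_of_coprime hcop e4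

end Chunk4

section Chunk5
variable {a b c : ℕ} {t u : Composition (a+b+c)}

lemma defect_cong (hv : 2*v+1 = a ∨ 2*v+1 = 2*a+b ∨ 2*v+1 = 2*a+2*b+c ∨ 2*v+1 = a+b+c) :
    2*v+1 ≡ a [MOD Nat.gcd (a+b) (b+c)] := by
  have hgp : Nat.gcd (a+b) (b+c) ∣ a+b := Nat.gcd_dvd_left _ _
  have hgq : Nat.gcd (a+b) (b+c) ∣ b+c := Nat.gcd_dvd_right _ _
  rcases hv with h1 | h1 | h1 | h1 <;> rw [h1]
  · rw [show 2*a+b = a + (a+b) by ring]; exact sum_cong hgp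
  · rw [show 2*a+2*b+c = a + ((a+b)+(b+c)) by ring]; exact sum_cong (hgp.add hgq)
  · rw [show a+b+c = a + (b+c) by ring]; exact sum_cong hgq

lemma two_c_add_p (ht : t.blocks = [a,b,c]) (hu : u.blocks = [a+b+c])
    (ha : 0 < a) (hb : 0 < b) (hc : 0 < c) :
    2 * cycleCount t u + pathCount t u = Nat.gcd (a+b) (b+c) := by
  set g := Nat.gcd (a+b) (b+c) with hg
  have hg0 : 0 < g := Nat.gcd_pos_of_pos_left _ (by omega)
  have hgle : g ≤ a+b+c := le_trans (Nat.le_of_dvd (by omega) (Nat.gcd_dvd_left _ _)) (by omega)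
  haveI : NeZero g := ⟨hg0.ne'⟩
  letI : Fintype ((Meander t u).ConnectedComponent) := Fintype.ofFinite _
  have hvr : ∀ r : ZMod g, ((r.val : ℕ) : ZMod g) = r := fun r => ZMod.natCast_rightInverse r
  set A : ZMod g := (a : ZMod g) with hA
  set m' : ZMod g → (Meander t u).ConnectedComponent :=
    fun r => (Meander t u).connectedComponentMk ⟨r.val, lt_of_lt_of_le (ZMod.val_lt r) hgle⟩
    with hm'
  -- fibers of m'
  have hm_eq : ∀ r r' : ZMod g, m' r = m' r' ↔ (r = r' ∨ r + r' + 1 = A) := by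
    intro r r'
    rw [hm', SimpleGraph.ConnectedComponent.eq, reach_iff ht hu ha hb hc]
    simp only [Fin.val_mk]
    constructor
    · rintro (h | h)
      · left
        rw [← hvr r, ← hvr r']
        exact (ZMod.natCast_eq_natCast_iff _ _ _).mpr h
      · right
        have := (ZMod.natCast_eq_natCast_iff _ _ _).mpr h
        push_cast at this
        rw [hvr r, hvr r'] at this
        exact this
    · rintro (h | h)
      · left
        have : ((r.val : ℕ) : ZMod g) = ((r'.val : ℕ) : ZMod g) := by rw [hvr r, hvr r', h]
        exact (ZMod.natCast_eq_natCast_iff _ _ _).mp this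
      · right
        refine (ZMod.natCast_eq_natCast_iff _ _ _).mp ?_
        push_cast
        rw [hvr r, hvr r']
        exact h
  have hm_surj : ∀ comp : (Meander t u).ConnectedComponent, ∃ r, m' r = comp := by
    intro comp
    obtain ⟨v, hv⟩ := comp.exists_rep
    refine ⟨((v.val : ℕ) : ZMod g), ?_⟩
    rw [← hv]
    exact SimpleGraph.ConnectedComponent.sound ((reach_iff ht hu ha hb hc _ _).mpr
      (Or.inl (by
        show ZMod.val (((v.val : ℕ)) : ZMod g) ≡ v.val [MOD Nat.gcd (a+b) (b+c)]
        rw [ZMod.val_natCast]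
        exact Nat.mod_modEq _ _)))
  -- characterization of cycle components
  have hcyc : ∀ r : ZMod g, IsCycleComp t u (m' r) ↔ ¬ (2*r + 1 = A) := by
    intro r
    constructor
    · intro hcy
      intro hfx
      -- get ℕ congruence from hfx
      have hfx' : 2*r.val+1 ≡ a [MOD g] := by
        refine (ZMod.natCast_eq_natCast_iff _ _ _).mp ?_
        push_cast
        rw [hvr r]
        exact hfx
      obtain ⟨v0, hv0n, hv0r, hv0t⟩ := exists_defect ha hb hc r.val hfx'
      have hmk : (Meander t u).connectedComponentMk ⟨v0, hv0n⟩ = m' r := by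
        rw [hm', SimpleGraph.ConnectedComponent.eq, reach_iff ht hu ha hb hc]
        left
        exact hv0r
      obtain ⟨htop, hbot⟩ := hcy _ hmk
      rcases hv0t with h1 | h1 | h1 | h1
      · exact top_defect ht hb hc _ (Or.inl h1) htop
      · exact top_defect ht hb hc _ (Or.inr (Or.inl h1)) htop
      · exact top_defect ht hb hc _ (Or.inr (Or.inr h1)) htop
      · exact bot_defect hu _ h1 hbot
    · intro hnfx v hv
      -- v is in the component of r
      have hrel : (v.val ≡ r.val [MOD g] ∨ v.val + r.val + 1 ≡ a [MOD g]) := by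
        rw [hm', SimpleGraph.ConnectedComponent.eq, reach_iff ht hu ha hb hc] at hv
        exact hv
      constructor
      · by_contra hno
        have h1 := no_top_partner ht v hno
        have h2 : 2*v.val+1 ≡ a [MOD g] := by
          rcases h1 with h1 | h1 | h1
          · exact defect_cong (Or.inl h1)
          · exact defect_cong (Or.inr (Or.inl h1))
          · exact defect_cong (Or.inr (Or.inr (Or.inl h1)))
        apply hnfx
        have e1 : 2*((v.val : ℕ) : ZMod g)+1 = A := by
          have := (ZMod.natCast_eq_natCast_iff _ _ _).mpr h2
          push_cast at this
          exact this
        rcases hrel with h3 | h3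
        · have e2 : ((v.val : ℕ) : ZMod g) = r := by
            rw [← hvr r]; exact (ZMod.natCast_eq_natCast_iff _ _ _).mpr h3
          rw [← e2]; exact e1
        · have e2 : ((v.val : ℕ) : ZMod g) + r + 1 = A := by
            have := (ZMod.natCast_eq_natCast_iff _ _ _).mpr h3
            push_cast at this
            rw [hvr r] at this
            exact this
          linear_combination 2 * e2 - e1
      · by_contra hno
        have h1 := no_bot_partner hu v hno
        have h2 : 2*v.val+1 ≡ a [MOD g] := defect_cong (Or.inr (Or.inr (Or.inr h1)))
        apply hnfx
        have e1 : 2*((v.val : ℕ) : ZMod g)+1 = A := by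
          have := (ZMod.natCast_eq_natCast_iff _ _ _).mpr h2
          push_cast at this
          exact this
        rcases hrel with h3 | h3
        · have e2 : ((v.val : ℕ) : ZMod g) = r := by
            rw [← hvr r]; exact (ZMod.natCast_eq_natCast_iff _ _ _).mpr h3
          rw [← e2]; exact e1
        · have e2 : ((v.val : ℕ) : ZMod g) + r + 1 = A := by
            have := (ZMod.natCast_eq_natCast_iff _ _ _).mpr h3
            push_cast at this
            rw [hvr r] at this
            exact this
          linear_combination 2 * e2 - e1
  -- counting
  classical
  have hcard : Fintype.card (ZMod g) =
      ∑ comp : (Meander t u).ConnectedComponent,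
        (Finset.univ.filter (fun r => m' r = comp)).card := by
    rw [← Finset.card_univ]
    exact Finset.card_eq_sum_card_fiberwise (fun x _ => Finset.mem_univ _)
  have hfib : ∀ comp : (Meander t u).ConnectedComponent,
      (Finset.univ.filter (fun r => m' r = comp)).card =
        if IsCycleComp t u comp then 2 else 1 := by
    intro comp
    obtain ⟨r₀, rfl⟩ := hm_surj comp
    by_cases hfx : 2*r₀+1 = A
    · rw [if_neg (by rw [hcyc r₀]; exact fun h => h hfx)]
      have : Finset.univ.filter (fun r => m' r = m' r₀) = {r₀} := by
        ext r
        simp only [Finset.mem_filter, Finset.mem_univ, true_and, Finset.mem_singleton,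
          hm_eq r r₀]
        constructor
        · rintro (h | h)
          · exact h
          · have : r = A - r₀ - 1 := by linear_combination h
            rw [this]; linear_combination -hfx
        · rintro rfl; left; rfl
      rw [this, Finset.card_singleton]
    · rw [if_pos ((hcyc r₀).mpr hfx)]
      have hne : r₀ ≠ A - r₀ - 1 := by
        intro h
        apply hfx
        linear_combination h
      have : Finset.univ.filter (fun r => m' r = m' r₀) = {r₀, A - r₀ - 1} := by
        ext r
        simp only [Finset.mem_filter, Finset.mem_univ, true_and, Finset.mem_insert,
          Finset.mem_singleton, hm_eq r r₀]
        constructor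
        · rintro (h | h)
          · exact Or.inl h
          · right; linear_combination h
        · rintro (rfl | h)
          · left; rfl
          · right; linear_combination h
      rw [this, Finset.card_pair hne]
  have hsum : Fintype.card (ZMod g) =
      (Finset.univ.filter (fun comp => IsCycleComp t u comp)).card +
      Fintype.card ((Meander t u).ConnectedComponent) := by
    rw [hcard]
    have : ∀ comp : (Meander t u).ConnectedComponent,
        (Finset.univ.filter (fun r => m' r = comp)).card =
          (if IsCycleComp t u comp then 1 else 0) + 1 := by
      intro comp; rw [hfib comp]; split <;> rfl
    rw [Finset.sum_congr rfl (fun comp _ => this comp), Finset.sum_add_distrib,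
      Finset.sum_const, smul_eq_mul, mul_one, Finset.card_univ, ← Finset.card_filter]
  have hsplit : (Finset.univ.filter (fun comp => IsCycleComp t u comp)).card +
      (Finset.univ.filter (fun comp => ¬ IsCycleComp t u comp)).card =
      Fintype.card ((Meander t u).ConnectedComponent) := by
    rw [← Finset.card_univ]
    exact Finset.card_filter_add_card_filter_not _
  have hzc : Fintype.card (ZMod g) = g := ZMod.card g
  have hC : cycleCount t u = (Finset.univ.filter (fun comp => IsCycleComp t u comp)).card := by
    rw [cycleCount, Nat.card_eq_fintype_card]
    convert Fintype.card_subtype _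
  have hP : pathCount t u = (Finset.univ.filter (fun comp => ¬ IsCycleComp t u comp)).card := by
    rw [pathCount, Nat.card_eq_fintype_card]
    convert Fintype.card_subtype _
  omega

end Chunk5


theorem index_three_part_parabolic (a b c : ℕ) (ha : 0 < a) (hb : 0 < b) (hc : 0 < c) :
    seaweedInd
      (compOfList (a + b + c) [a, b, c]
        (by intro x hx; simp at hx; rcases hx with rfl | rfl | rfl <;> assumption)
        (by simp [add_assoc]))
      (compOfList (a + b + c) [a + b + c] (by intro x hx; simp at hx; omega) (by simp)) =
    Nat.gcd (a + b) (b + c) - 1 := by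
  show 2 * cycleCount _ _ + pathCount _ _ - 1 = _
  rw [two_c_add_p rfl rfl ha hb hc]
end
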